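/- For every integer k ≥ 1, the function φ_k(x) := Γ(x + k/2)/(Γ(x+1) k^x) is (weakly) decreasing on the interval [0,1]. -/

import Mathlib

open Real

/-- `log((1+u)/(1-u)) ≥ 2u` for `0 ≤ u < 1`. -/
lemma aux_log_two_mul (u : ℝ) (h0 : 0 ≤ u) (h1 : u < 1) :
    2 * u ≤ Real.log (1 + u) - Real.log (1 - u) := by
  have hd : ∀ t ∈ Set.Ico (0:ℝ) 1, HasDerivAt
      (fun t : ℝ => Real.log (1 + t) - Real.log (1 - t) - 2 * t)
      (1 / (1 + t) - (-1) / (1 - t) - 2) t := by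
    intro t ht
    have h1t : (0:ℝ) < 1 + t := by linarith [ht.1]
    have h2t : (0:ℝ) < 1 - t := by linarith [ht.2]
    have d1 : HasDerivAt (fun t : ℝ => 1 + t) 1 t := (hasDerivAt_id t).const_add 1
    have d2 : HasDerivAt (fun t : ℝ => 1 - t) (-1) t := by
      exact (hasDerivAt_id' t).const_sub 1
    have l1 := d1.log h1t.ne'
    have l2 := d2.log h2t.ne'
    have d3 : HasDerivAt (fun t : ℝ => 2 * t) 2 t := by
      simpa [mul_comm] using (hasDerivAt_id t).const_mul (2:ℝ)
    exact (l1.sub l2).sub d3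
  have hmono : MonotoneOn (fun t : ℝ => Real.log (1 + t) - Real.log (1 - t) - 2 * t)
      (Set.Ico (0:ℝ) 1) := by
    apply monotoneOn_of_deriv_nonneg (convex_Ico 0 1)
    · intro t ht; exact ((hd t ht).continuousAt).continuousWithinAt
    · rw [interior_Ico]
      intro t ht
      exact ((hd t ⟨ht.1.le, ht.2⟩).differentiableAt).differentiableWithinAt
    · rw [interior_Ico]
      intro t ht
      rw [(hd t ⟨ht.1.le, ht.2⟩).deriv]
      have h1t : (0:ℝ) < 1 + t := by linarith [ht.1]
      have h2t : (0:ℝ) < 1 - t := by linarith [ht.2]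
      have e : 1 / (1 + t) - -1 / (1 - t) - 2 = (2 * t ^ 2) / ((1 + t) * (1 - t)) := by
        field_simp; ring
      rw [e]
      positivity
  have := hmono (Set.mem_Ico.mpr ⟨le_refl 0, one_pos⟩) (Set.mem_Ico.mpr ⟨h0, h1⟩) h0
  simpa using this

/-- `1/c ≤ log(2c+1) - log(2c-1)` for `c ≥ 1`. -/
lemma aux_inv_le_log (c : ℝ) (hc : 1 ≤ c) :
    1 / c ≤ Real.log (2 * c + 1) - Real.log (2 * c - 1) := by
  have hc0 : (0:ℝ) < c := by linarith
  have h2c : (0:ℝ) < 2 * c := by linarith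
  have h2c1 : (0:ℝ) < 2 * c - 1 := by linarith
  have key := aux_log_two_mul (1 / (2 * c)) (by positivity)
    (by rw [div_lt_one h2c]; linarith)
  have e1 : 1 + 1 / (2 * c) = (2 * c + 1) / (2 * c) := by field_simp
  have e2 : 1 - 1 / (2 * c) = (2 * c - 1) / (2 * c) := by field_simp
  rw [e1, e2, Real.log_div (by positivity) h2c.ne', Real.log_div h2c1.ne' h2c.ne'] at key
  have e3 : 2 * (1 / (2 * c)) = 1 / c := by field_simp
  linarith [key, e3.le]

/-- `log(c+1) - log c ≤ 1/c` for `c > 0`. -/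
lemma aux_log_le_inv (c : ℝ) (hc : 0 < c) :
    Real.log (c + 1) - Real.log c ≤ 1 / c := by
  rw [← Real.log_div (by positivity) hc.ne']
  have h := Real.log_le_sub_one_of_pos (show (0:ℝ) < (c + 1) / c by positivity)
  have e : (c + 1) / c - 1 = 1 / c := by field_simp; ring
  linarith

/-- The key bound on the partial sums of the digamma-difference series. -/
lemma aux_sum_bound (k : ℕ) (hk : 1 ≤ k) (n : ℕ) (x : ℝ) (hx : 0 ≤ x) :
    ∑ j ∈ Finset.range (n + 1), (1 / (x + 1 + (j:ℝ)) - 1 / (x + (k:ℝ)/2 + j))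
      ≤ Real.log k := by
  have hk0 : (0:ℝ) < k := by exact_mod_cast hk
  rcases eq_or_lt_of_le hk with h1 | h2
  · -- k = 1
    have hk1 : (k:ℝ) = 1 := by exact_mod_cast h1.symm
    rw [hk1, Real.log_one]
    apply Finset.sum_nonpos
    intro j hj
    have p1 : (0:ℝ) < x + 1/2 + j := by positivity
    rw [sub_nonpos]
    apply one_div_le_one_div_of_le p1
    linarith
  · -- k ≥ 2
    have hk2 : (2:ℝ) ≤ (k:ℝ) := by exact_mod_cast h2
    set a : ℝ := (k:ℝ)/2 with ha_def
    have ha1 : 1 ≤ a := by rw [ha_def]; linarith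
    have ha0 : 0 < a := by linarith
    have step1 : ∑ j ∈ Finset.range (n + 1), (1 / (x + 1 + (j:ℝ)) - 1 / (x + a + j))
        ≤ ∑ j ∈ Finset.range (n + 1), (1 / (1 + (j:ℝ)) - 1 / (a + j)) := by
      apply Finset.sum_le_sum
      intro j hj
      have p1 : (0:ℝ) < x + 1 + j := by positivity
      have p2 : (0:ℝ) < x + a + j := by positivity
      have p3 : (0:ℝ) < 1 + (j:ℝ) := by positivity
      have p4 : (0:ℝ) < a + (j:ℝ) := by positivity
      have e1 : 1 / (x + 1 + (j:ℝ)) - 1 / (x + a + j)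
          = (a - 1) / ((x + 1 + j) * (x + a + j)) := by
        rw [div_sub_div _ _ p1.ne' p2.ne']
        congr 1
        ring
      have e2 : 1 / (1 + (j:ℝ)) - 1 / (a + j)
          = (a - 1) / ((1 + j) * (a + j)) := by
        rw [div_sub_div _ _ p3.ne' p4.ne']
        congr 1
        ring
      rw [e1, e2]
      have hden : (1 + (j:ℝ)) * (a + j) ≤ (x + 1 + j) * (x + a + j) := by nlinarith
      exact div_le_div_of_nonneg_left (by linarith) (by positivity) hden
    have step2 : ∑ j ∈ Finset.range (n + 1), (1 / (1 + (j:ℝ)) - 1 / (a + j))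
        ≤ ∑ j ∈ Finset.range (n + 1),
          ((Real.log (2 * ((j:ℝ) + 1) + 1) - Real.log (2 * (j:ℝ) + 1))
            - (Real.log (a + ((j:ℝ) + 1)) - Real.log (a + j))) := by
      apply Finset.sum_le_sum
      intro j hj
      have hle1 : 1 / (1 + (j:ℝ)) ≤ Real.log (2 * ((j:ℝ)+1) + 1) - Real.log (2 * ((j:ℝ)+1) - 1) := by
        have := aux_inv_le_log ((j:ℝ) + 1) (le_add_of_nonneg_left j.cast_nonneg)
        rwa [add_comm (1:ℝ) (j:ℝ)]
      have hle2 : Real.log ((a + (j:ℝ)) + 1) - Real.log (a + j) ≤ 1 / (a + j) := by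
        exact aux_log_le_inv (a + j) (by positivity)
      have e1 : 2 * ((j:ℝ) + 1) - 1 = 2 * (j:ℝ) + 1 := by ring
      have e2 : a + ((j:ℝ) + 1) = (a + (j:ℝ)) + 1 := by ring
      rw [e1] at hle1
      rw [e2]
      linarith
    set F : ℕ → ℝ := fun j => Real.log (2 * (j:ℝ) + 1) - Real.log (a + j) with hF
    have tele : ∑ j ∈ Finset.range (n + 1),
          ((Real.log (2 * ((j:ℝ) + 1) + 1) - Real.log (2 * (j:ℝ) + 1))
            - (Real.log (a + ((j:ℝ) + 1)) - Real.log (a + j)))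
        = (Real.log (2 * ((n:ℝ) + 1) + 1) - Real.log 1)
            - (Real.log (a + ((n:ℝ) + 1)) - Real.log a) := by
      have h := Finset.sum_range_sub F (n + 1)
      have h2 : ∑ j ∈ Finset.range (n + 1),
          ((Real.log (2 * ((j:ℝ) + 1) + 1) - Real.log (2 * (j:ℝ) + 1))
            - (Real.log (a + ((j:ℝ) + 1)) - Real.log (a + j)))
          = ∑ j ∈ Finset.range (n + 1), (F (j + 1) - F j) := by
        apply Finset.sum_congr rfl
        intro j hj
        simp only [hF]
        push_cast
        ring
      rw [h2, h]
      simp only [hF]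
      push_cast
      ring
    have final : (Real.log (2 * ((n:ℝ) + 1) + 1) - Real.log 1)
            - (Real.log (a + ((n:ℝ) + 1)) - Real.log a) ≤ Real.log k := by
      have hm : (0:ℝ) < a + ((n:ℝ) + 1) := by positivity
      have h1 : Real.log (2 * ((n:ℝ) + 1) + 1) ≤ Real.log (2 * (a + ((n:ℝ) + 1))) := by
        apply Real.log_le_log (by positivity)
        linarith
      have h2 : Real.log (2 * (a + ((n:ℝ) + 1))) = Real.log 2 + Real.log (a + ((n:ℝ) + 1)) := by
        rw [Real.log_mul (by norm_num) hm.ne']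
      have h3 : Real.log 2 + Real.log a = Real.log k := by
        rw [← Real.log_mul (by norm_num) ha0.ne']
        congr 1
        rw [ha_def]; ring
      rw [Real.log_one]
      linarith
    calc ∑ j ∈ Finset.range (n + 1), (1 / (x + 1 + (j:ℝ)) - 1 / (x + a + j))
        ≤ _ := step1
      _ ≤ _ := step2
      _ = _ := tele
      _ ≤ Real.log k := final

theorem phi_k_antitoneOn (k : ℕ) (hk : 1 ≤ k) :
    AntitoneOn (fun x : ℝ => Real.Gamma (x + k / 2) / (Real.Gamma (x + 1) * (k : ℝ) ^ x))
      (Set.Icc (0 : ℝ) 1) := by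
  intro x hx y hy hxy
  obtain ⟨hx0, hx1⟩ := hx
  obtain ⟨hy0, hy1⟩ := hy
  have hk0 : (0:ℝ) < (k:ℝ) := by exact_mod_cast hk
  set a : ℝ := (k:ℝ)/2 with ha_def
  have ha0 : (0:ℝ) < a := by positivity
  have ha12 : (1:ℝ)/2 ≤ a := by
    rw [ha_def]
    have : (1:ℝ) ≤ (k:ℝ) := by exact_mod_cast hk
    linarith
  -- key pointwise inequality along the Gamma sequence
  have key : ∀ n : ℕ, 1 ≤ n →
      Real.GammaSeq (y + a) n / (Real.GammaSeq (y + 1) n * (k:ℝ) ^ y)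
        ≤ Real.GammaSeq (x + a) n / (Real.GammaSeq (x + 1) n * (k:ℝ) ^ x) := by
    intro n hn
    have hn0 : (0:ℝ) < (n:ℝ) := by exact_mod_cast hn
    set g : ℝ → ℝ := fun t =>
      (∑ j ∈ Finset.range (n + 1), (Real.log (t + 1 + (j:ℝ)) - Real.log (t + a + j)))
        - t * Real.log k with hg_def
    have hd : ∀ t : ℝ, 0 ≤ t → HasDerivAt g
        ((∑ j ∈ Finset.range (n + 1), (1 / (t + 1 + (j:ℝ)) - 1 / (t + a + j)))
          - Real.log k) t := by
      intro t ht
      have hsum : HasDerivAt (fun t : ℝ =>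
          ∑ j ∈ Finset.range (n + 1), (Real.log (t + 1 + (j:ℝ)) - Real.log (t + a + j)))
          (∑ j ∈ Finset.range (n + 1), (1 / (t + 1 + (j:ℝ)) - 1 / (t + a + j))) t := by
        apply HasDerivAt.fun_sum
        intro j hj
        have p1 : (0:ℝ) < t + 1 + j := by positivity
        have p2 : (0:ℝ) < t + a + j := by positivity
        have d1 : HasDerivAt (fun t : ℝ => t + 1 + (j:ℝ)) 1 t :=
          ((hasDerivAt_id t).add_const 1).add_const _
        have d2 : HasDerivAt (fun t : ℝ => t + a + (j:ℝ)) 1 t :=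
          ((hasDerivAt_id t).add_const a).add_const _
        exact (d1.log p1.ne').sub (d2.log p2.ne')
      exact hsum.sub (hasDerivAt_mul_const (Real.log k))
    have hanti : AntitoneOn g (Set.Icc (0:ℝ) 1) := by
      apply antitoneOn_of_deriv_nonpos (convex_Icc 0 1)
      · intro t ht
        exact ((hd t ht.1).continuousAt).continuousWithinAt
      · rw [interior_Icc]
        intro t ht
        exact ((hd t ht.1.le).differentiableAt).differentiableWithinAt
      · rw [interior_Icc]
        intro t ht
        rw [(hd t ht.1.le).deriv]
        have := aux_sum_bound k hk n t ht.1.le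
        rw [← ha_def] at this
        linarith
    have hgyx : g y ≤ g x := hanti ⟨hx0, hx1⟩ ⟨hy0, hy1⟩ hxy
    -- identity between the Gamma sequence ratio and exp(g)
    have hQ : ∀ t : ℝ, 0 ≤ t →
        Real.GammaSeq (t + a) n / (Real.GammaSeq (t + 1) n * (k:ℝ) ^ t)
          = (n:ℝ) ^ (a - 1) * Real.exp (g t) := by
      intro t ht
      have p1 : (0:ℝ) < ∏ j ∈ Finset.range (n + 1), (t + 1 + (j:ℝ)) :=
        Finset.prod_pos fun j _ => by positivity
      have p2 : (0:ℝ) < ∏ j ∈ Finset.range (n + 1), (t + a + (j:ℝ)) :=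
        Finset.prod_pos fun j _ => by positivity
      have hkt : (0:ℝ) < (k:ℝ) ^ t := Real.rpow_pos_of_pos hk0 t
      have hnt : (0:ℝ) < (n:ℝ) ^ (t + 1) := Real.rpow_pos_of_pos hn0 _
      have hfact : (0:ℝ) < (n.factorial : ℝ) := by exact_mod_cast n.factorial_pos
      have hexp : Real.exp (g t)
          = (∏ j ∈ Finset.range (n + 1), (t + 1 + (j:ℝ)))
            / ((∏ j ∈ Finset.range (n + 1), (t + a + (j:ℝ))) * (k:ℝ) ^ t) := by
        rw [hg_def]
        rw [Real.exp_sub, Real.exp_sum]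
        have hterm : ∀ j ∈ Finset.range (n + 1),
            Real.exp (Real.log (t + 1 + (j:ℝ)) - Real.log (t + a + j))
              = (t + 1 + (j:ℝ)) / (t + a + (j:ℝ)) := by
          intro j hj
          have p1' : (0:ℝ) < t + 1 + j := by positivity
          have p2' : (0:ℝ) < t + a + j := by positivity
          rw [Real.exp_sub, Real.exp_log p1', Real.exp_log p2']
        rw [Finset.prod_congr rfl hterm, Finset.prod_div_distrib]
        rw [show t * Real.log k = Real.log k * t by ring, ← Real.rpow_def_of_pos hk0]
        rw [div_div]
      rw [hexp, Real.GammaSeq, Real.GammaSeq]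
      have hpow : (n:ℝ) ^ (t + a) = (n:ℝ) ^ (t + 1) * (n:ℝ) ^ (a - 1) := by
        rw [← Real.rpow_add hn0]
        congr 1
        ring
      rw [hpow]
      field_simp
    rw [hQ x hx0, hQ y hy0]
    have hnpos : (0:ℝ) ≤ (n:ℝ) ^ (a - 1) := (Real.rpow_pos_of_pos hn0 _).le
    exact mul_le_mul_of_nonneg_left (Real.exp_le_exp.mpr hgyx) hnpos
  -- take limits
  have hlim : ∀ t : ℝ, 0 ≤ t →
      Filter.Tendsto (fun n : ℕ =>
        Real.GammaSeq (t + a) n / (Real.GammaSeq (t + 1) n * (k:ℝ) ^ t))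
        Filter.atTop (nhds (Real.Gamma (t + a) / (Real.Gamma (t + 1) * (k:ℝ) ^ t))) := by
    intro t ht
    have hden : Real.Gamma (t + 1) * (k:ℝ) ^ t ≠ 0 := by
      have h1 : 0 < Real.Gamma (t + 1) := Real.Gamma_pos_of_pos (by linarith)
      have h2 : (0:ℝ) < (k:ℝ) ^ t := Real.rpow_pos_of_pos hk0 t
      positivity
    exact (Real.GammaSeq_tendsto_Gamma (t + a)).div
      ((Real.GammaSeq_tendsto_Gamma (t + 1)).mul_const _) hden
  exact le_of_tendsto_of_tendsto (hlim y hy0) (hlim x hx0)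
    (Filter.eventually_atTop.mpr ⟨1, fun n hn => key n hn⟩)
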